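/- Let A be the adjacency matrix of a graph on n vertices that is a disjoint union of a clique on a set C of size k (2 ≤ k ≤ n−1) and n−k isolated vertices. Then S = C is the unique maximizer over nonempty proper subsets S of the criterion W(S) = O(S)/|S|² − B(S)/(|S||S^c|), with W(C) = (k−1)/k. -/

import Mathlib

private lemma stmt_12_aux_ineq (a s t K : ℝ) (ha0 : 0 ≤ a) (hs1 : 1 ≤ s) (ht1 : 1 ≤ t)
    (has : a ≤ s) (haK : a ≤ K) (hK2 : 2 ≤ K) :
    (a * a - a) / s ^ 2 - a * (K - a) / (s * t) ≤ (K - 1) / K := by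
  have hs0 : (0:ℝ) < s := by linarith
  have ht0 : (0:ℝ) < t := by linarith
  have hK0 : (0:ℝ) < K := by linarith
  have hcore : a * (K - a) ≤ (K - 1) * s ^ 2 - K * a * (a - 1) := by
    nlinarith [mul_nonneg (mul_nonneg (by linarith : (0:ℝ) ≤ K - 1)
      (by linarith : (0:ℝ) ≤ s - a)) (by linarith : (0:ℝ) ≤ s + a)]
  have hKa0 : 0 ≤ a * (K - a) := mul_nonneg ha0 (by linarith)
  rw [div_sub_div _ _ (by positivity) (by positivity), div_le_div_iff₀ (by positivity) hK0]
  nlinarith [mul_nonneg hs0.le (mul_nonneg ht0.le (le_trans hKa0 hcore)),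
    mul_nonneg (mul_nonneg (mul_nonneg hK0.le hs0.le) hs0.le) hKa0]

private lemma stmt_12_aux_eq (a s t K : ℝ) (ha0 : 0 ≤ a) (hs1 : 1 ≤ s) (ht1 : 1 ≤ t)
    (has : a ≤ s) (haK : a ≤ K) (hK2 : 2 ≤ K)
    (hEq : (a * a - a) / s ^ 2 - a * (K - a) / (s * t) = (K - 1) / K) :
    a = K ∧ s = K := by
  have hs0 : (0:ℝ) < s := by linarith
  have ht0 : (0:ℝ) < t := by linarith
  have hK0 : (0:ℝ) < K := by linarith
  have hcore : a * (K - a) ≤ (K - 1) * s ^ 2 - K * a * (a - 1) := by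
    nlinarith [mul_nonneg (mul_nonneg (by linarith : (0:ℝ) ≤ K - 1)
      (by linarith : (0:ℝ) ≤ s - a)) (by linarith : (0:ℝ) ≤ s + a)]
  have hKa0 : 0 ≤ a * (K - a) := mul_nonneg ha0 (by linarith)
  field_simp at hEq
  have hE : K * t * (a * (a - 1)) - K * s * (a * (K - a)) = (K - 1) * (s ^ 2 * t) := by
    have h2 : s * (K * t * (a * (a - 1)) - K * s * (a * (K - a)))
        = s * ((K - 1) * (s ^ 2 * t)) := by linear_combination s * hEq
    exact mul_left_cancel₀ (ne_of_gt hs0) h2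
  have hzero : a * (K - a) = 0 := by
    nlinarith [mul_le_mul_of_nonneg_left hcore ht0.le,
      mul_nonneg (mul_nonneg hK0.le hs0.le) hKa0, hKa0]
  have haK' : a = K := by
    rcases mul_eq_zero.mp hzero with h | h
    · exfalso; rw [h] at hE
      nlinarith [mul_pos (mul_pos hs0 hs0) ht0]
    · linarith
  refine ⟨haK', ?_⟩
  rw [haK'] at hE
  have h4 : (K - 1) * t * (s ^ 2 - K ^ 2) = 0 := by linear_combination -hE
  have h3 : s ^ 2 = K ^ 2 := by
    rcases mul_eq_zero.mp h4 with h | h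
    · exfalso; rcases mul_eq_zero.mp h with h' | h' <;> linarith
    · linarith
  nlinarith

/-- For a clique C of size k (2 ≤ k ≤ n-1) plus isolated vertices, C is the unique
maximizer of W over nonempty proper subsets, with W(C) = (k-1)/k. -/
theorem stmt_12 (n k : ℕ) (C : Finset (Fin n)) (hk : C.card = k)
    (hk2 : 2 ≤ k) (hkn : k ≤ n - 1)
    (A : Fin n → Fin n → ℝ)
    (hA : ∀ i j, A i j = if i ≠ j ∧ i ∈ C ∧ j ∈ C then 1 else 0)
    (W : Finset (Fin n) → ℝ)
    (hW : ∀ S, W S = (∑ i ∈ S, ∑ j ∈ S, A i j) / (S.card : ℝ) ^ 2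
      - (∑ i ∈ S, ∑ j ∈ Sᶜ, A i j) / ((S.card : ℝ) * (Sᶜ.card : ℝ))) :
    W C = ((k : ℝ) - 1) / k ∧
    (∀ S : Finset (Fin n), S.Nonempty → Sᶜ.Nonempty → W S ≤ W C) ∧
    (∀ S : Finset (Fin n), S.Nonempty → Sᶜ.Nonempty → W S = W C → S = C) := by
  have key : ∀ S T : Finset (Fin n), ∑ i ∈ S, ∑ j ∈ T, A i j
      = ((S ∩ C).card : ℝ) * ((T ∩ C).card : ℝ) - ((S ∩ T ∩ C).card : ℝ) := by
    intro S T
    have hA' : ∀ i j, A i j = (if i ∈ C then (1:ℝ) else 0) * (if j ∈ C then (1:ℝ) else 0)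
        - (if i = j then (if i ∈ C then (1:ℝ) else 0) else 0) := by
      intro i j; rw [hA]
      by_cases h1 : i ∈ C <;> by_cases h2 : j ∈ C <;> by_cases h3 : i = j <;>
        simp [h1, h2, h3] <;> simp_all
    simp_rw [hA', Finset.sum_sub_distrib]
    congr 1
    · rw [← Finset.sum_mul_sum]
      congr 1 <;> · rw [Finset.sum_ite_mem, Finset.sum_const, nsmul_eq_mul, mul_one]
    · have : ∀ i ∈ S, (∑ j ∈ T, if i = j then (if i ∈ C then (1:ℝ) else 0) else 0)
          = if i ∈ T ∩ C then (1:ℝ) else 0 := by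
        intro i _
        rw [Finset.sum_ite_eq]
        by_cases h1 : i ∈ T <;> by_cases h2 : i ∈ C <;> simp [h1, h2]
      rw [Finset.sum_congr rfl this, Finset.sum_ite_mem, Finset.sum_const, nsmul_eq_mul, mul_one,
        Finset.inter_assoc]
  have hK2 : (2:ℝ) ≤ (k:ℝ) := by exact_mod_cast hk2
  have hK0 : (0:ℝ) < (k:ℝ) := by linarith
  have hWC : W C = ((k : ℝ) - 1) / k := by
    have e1 : Cᶜ ∩ C = (∅ : Finset (Fin n)) := by simp [Finset.inter_comm]
    rw [hW, key, key]
    simp only [Finset.inter_self, Finset.inter_compl, Finset.empty_inter, e1, hk,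
      Finset.card_empty, Nat.cast_zero, mul_zero, zero_sub, sub_zero, neg_zero, zero_div]
    field_simp
  have main : ∀ S : Finset (Fin n), S.Nonempty → Sᶜ.Nonempty →
      W S ≤ W C ∧ (W S = W C → S = C) := by
    intro S hS hSc
    have hcard : (S ∩ C).card + (Sᶜ ∩ C).card = k := by
      rw [← Finset.card_union_of_disjoint
        (Finset.disjoint_of_subset_left Finset.inter_subset_left
          (Finset.disjoint_of_subset_right Finset.inter_subset_left disjoint_compl_right)),
        ← Finset.union_inter_distrib_right, Finset.union_compl, Finset.univ_inter, hk]
    have hWS : W S = (((S ∩ C).card : ℝ) * ((S ∩ C).card : ℝ) - ((S ∩ C).card : ℝ)) / ((S.card : ℝ)) ^ 2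
        - (((S ∩ C).card : ℝ) * ((k : ℝ) - ((S ∩ C).card : ℝ))) / ((S.card : ℝ) * ((Sᶜ).card : ℝ)) := by
      rw [hW, key, key]
      simp only [Finset.inter_self, Finset.inter_compl, Finset.empty_inter,
        Finset.card_empty]
      have h1 : (((Sᶜ) ∩ C).card : ℝ) = (k : ℝ) - ((S ∩ C).card : ℝ) := by
        rw [← hcard]; push_cast; ring
      rw [h1]
      push_cast
      ring_nf
    have ha0 : (0:ℝ) ≤ ((S ∩ C).card : ℝ) := by positivity
    have hs1 : (1:ℝ) ≤ ((S.card : ℝ)) := by exact_mod_cast Finset.card_pos.mpr hS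
    have ht1 : (1:ℝ) ≤ (((Sᶜ).card : ℝ)) := by exact_mod_cast Finset.card_pos.mpr hSc
    have has : ((S ∩ C).card : ℝ) ≤ (S.card : ℝ) := by
      exact_mod_cast Finset.card_le_card Finset.inter_subset_left
    have haK : ((S ∩ C).card : ℝ) ≤ (k : ℝ) := by
      rw [← hk]; exact_mod_cast Finset.card_le_card Finset.inter_subset_right
    constructor
    · rw [hWS, hWC]
      exact stmt_12_aux_ineq _ _ _ _ ha0 hs1 ht1 has haK hK2
    · intro hEq
      rw [hWS, hWC] at hEq
      obtain ⟨haK', hsK⟩ := stmt_12_aux_eq _ _ _ _ ha0 hs1 ht1 has haK hK2 hEq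
      have hac : (S ∩ C).card = k := by exact_mod_cast haK'
      have hsc : S.card = k := by exact_mod_cast hsK
      have hSC : S ∩ C = C :=
        Finset.eq_of_subset_of_card_le Finset.inter_subset_right (by rw [hk, hac])
      have hCS : C ⊆ S := by rw [← hSC]; exact Finset.inter_subset_left
      exact (Finset.eq_of_subset_of_card_le hCS (by rw [hk, hsc])).symm
  exact ⟨hWC, fun S h1 h2 => (main S h1 h2).1, fun S h1 h2 => (main S h1 h2).2⟩
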